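/- Let n ≥ 2, let D ∈ M_n(ℂ) be a diagonal matrix with distinct diagonal entries λ_1, ..., λ_n, and let i ≠ j. Then there exists a matrix path C with C_0 = C_1 = D such that C_α has n distinct eigenvalues for every α ∈ [0,1], ‖C_α − D‖ < |λ_i − λ_j| for all α ∈ [0,1], and there is a C-eigenpath set {γ_1, ..., γ_n} with γ_k(0) = λ_k for all k, γ_i(1) = λ_j, γ_j(1) = λ_i, and γ_k(1) = λ_k for all k ≠ i, j. -/

import Mathlib

open Polynomial Set

def IsEigenpathSet (n : ℕ) (C : ℝ → Matrix (Fin n) (Fin n) ℂ) (γ : Fin n → ℝ → ℂ) : Prop :=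
  (∀ j, ContinuousOn (γ j) (Set.Icc 0 1)) ∧
  ∀ α ∈ Set.Icc (0 : ℝ) 1,
    (Finset.univ.val.map fun j => γ j α) = (Matrix.charpoly (C α)).roots


lemma aux_charpoly_diagonal {N : Type*} [DecidableEq N] [Fintype N] (d : N → ℂ) :
    (Matrix.diagonal d).charpoly = ∏ k, (X - C (d k)) := by
  have h : Matrix.charmatrix (Matrix.diagonal d) = Matrix.diagonal (fun k => X - C (d k)) := by
    ext k l
    by_cases h : k = l
    · subst h; simp [Matrix.charmatrix_apply_eq]
    · simp [Matrix.charmatrix_apply_ne _ _ _ h, Matrix.diagonal_apply_ne _ h]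
  rw [Matrix.charpoly, h, Matrix.det_diagonal]

lemma aux_abs_le_one {z : ℂ} (h : z.re^2 + z.im^2 ≤ 1) : ‖z‖ ≤ 1 := by
  rw [Complex.norm_def, ← Real.sqrt_one]
  apply Real.sqrt_le_sqrt
  simpa [Complex.normSq_apply, sq] using h

noncomputable def Cmat {n : ℕ} (lam : Fin n → ℂ) (i j : Fin n) (a b q : ℂ) :
    Matrix (Fin n) (Fin n) ℂ := Matrix.of fun k l =>
  if k = i then (if l = i then a else if l = j then q else 0)
  else if k = j then (if l = i then q else if l = j then b else 0)
  else if l = k then lam k else 0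

def myE {n : ℕ} (i j : Fin n) (hij : i ≠ j) :
    (Fin 2 ⊕ {k : Fin n // k ≠ i ∧ k ≠ j}) ≃ Fin n :=
  { toFun := Sum.elim (fun t => if t = 0 then i else j) (fun s => s.1)
    invFun := fun k =>
      if h1 : k = i then Sum.inl 0
      else if h2 : k = j then Sum.inl 1 else Sum.inr ⟨k, h1, h2⟩
    left_inv := by
      rintro (t | ⟨k, h1, h2⟩)
      · fin_cases t <;> simp [hij, Ne.symm hij]
      · simp [h1, h2]
    right_inv := by
      intro k
      by_cases h1 : k = i
      · simp [h1]
      · by_cases h2 : k = j <;> simp [h1, h2, Ne.symm hij] }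

lemma cmat_block {n : ℕ} (lam : Fin n → ℂ) (i j : Fin n) (hij : i ≠ j) (a b q : ℂ) :
    (Matrix.reindex (myE i j hij).symm (myE i j hij).symm (Cmat lam i j a b q)) =
      Matrix.fromBlocks !![a, q; q, b] 0 0
        (Matrix.diagonal fun s : {k : Fin n // k ≠ i ∧ k ≠ j} => lam s.1) := by
  ext x y
  rcases x with t | s <;> rcases y with t' | s'
  · fin_cases t <;> fin_cases t' <;>
      simp [Cmat, myE, Matrix.reindex_apply, Matrix.submatrix_apply, hij, Ne.symm hij]
  · fin_cases t <;>
      simp [Cmat, myE, Matrix.reindex_apply, Matrix.submatrix_apply, hij, Ne.symm hij,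
        s'.2.1, s'.2.2, Ne.symm s'.2.1, Ne.symm s'.2.2]
  · fin_cases t' <;>
      simp [Cmat, myE, Matrix.reindex_apply, Matrix.submatrix_apply, hij, Ne.symm hij,
        s.2.1, s.2.2, Ne.symm s.2.1, Ne.symm s.2.2]
  · by_cases h : s = s'
    · subst h
      simp [Cmat, myE, Matrix.reindex_apply, Matrix.submatrix_apply, s.2.1, s.2.2]
    · have h2 : s'.1 ≠ s.1 := fun hh => h (Subtype.ext hh.symm)
      simp [Cmat, myE, Matrix.reindex_apply, Matrix.submatrix_apply, s.2.1, s.2.2,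
        Matrix.diagonal_apply_ne _ h, h2]

lemma cmat_charpoly {n : ℕ} (lam : Fin n → ℂ) (i j : Fin n) (hij : i ≠ j)
    (a b q x y : ℂ) (hsum : x + y = a + b) (hprod : x * y = a * b - q * q) :
    (Cmat lam i j a b q).charpoly =
      ((X - C x) * (X - C y)) *
        ∏ s : {k : Fin n // k ≠ i ∧ k ≠ j}, (X - C (lam s.1)) := by
  rw [← Matrix.charpoly_reindex (myE i j hij).symm, cmat_block lam i j hij,
    Matrix.charpoly_fromBlocks_zero₂₁, aux_charpoly_diagonal]
  congr 1
  rw [Matrix.charpoly, Matrix.det_fin_two,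
    Matrix.charmatrix_apply_eq, Matrix.charmatrix_apply_eq,
    Matrix.charmatrix_apply_ne _ _ _ (by decide), Matrix.charmatrix_apply_ne _ _ _ (by decide)]
  have e00 : (!![a, q; q, b] : Matrix (Fin 2) (Fin 2) ℂ) 0 0 = a := rfl
  have e01 : (!![a, q; q, b] : Matrix (Fin 2) (Fin 2) ℂ) 0 1 = q := rfl
  have e10 : (!![a, q; q, b] : Matrix (Fin 2) (Fin 2) ℂ) 1 0 = q := rfl
  have e11 : (!![a, q; q, b] : Matrix (Fin 2) (Fin 2) ℂ) 1 1 = b := rfl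
  rw [e00, e01, e10, e11]
  have hc1 : C a + C b = C x + C y := by rw [← C_add, ← C_add, hsum]
  have hc2 : C a * C b - C q * C q = C x * C y := by
    rw [← C_mul, ← C_mul, ← C_mul, ← C_sub, hprod]
  linear_combination (-(X : ℂ[X])) * hc1 + hc2

lemma aux_univ_map_val {n : ℕ} (i j : Fin n) (hij : i ≠ j) (g : Fin n → ℂ) :
    ((Finset.univ : Finset (Fin n)).val.map g) =
      g i ::ₘ g j ::ₘ
        Multiset.map (fun s : {k : Fin n // k ≠ i ∧ k ≠ j} => g s.1)
          (Finset.univ : Finset {k : Fin n // k ≠ i ∧ k ≠ j}).val := by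
  have hi : (Finset.univ : Finset (Fin n)).val = i ::ₘ (Finset.univ.erase i).val := by
    rw [Finset.erase_val]
    exact (Multiset.cons_erase (by simp)).symm
  have hjmem : j ∈ (Finset.univ.erase i).val :=
    Finset.mem_def.1 (Finset.mem_erase.2 ⟨Ne.symm hij, Finset.mem_univ _⟩)
  have hj : (Finset.univ.erase i).val = j ::ₘ ((Finset.univ.erase i).erase j).val := by
    rw [Finset.erase_val]
    exact (Multiset.cons_erase hjmem).symm
  have hrest : Multiset.map Subtype.val
      (Finset.univ : Finset {k : Fin n // k ≠ i ∧ k ≠ j}).val =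
      ((Finset.univ.erase i).erase j).val := by
    refine (Multiset.Nodup.ext ?_ ?_).2 ?_
    · exact Multiset.Nodup.map Subtype.val_injective Finset.univ.nodup
    · exact Finset.nodup _
    · intro x
      rw [Multiset.mem_map, ← Finset.mem_def, Finset.mem_erase, Finset.mem_erase]
      constructor
      · rintro ⟨s, -, rfl⟩
        exact ⟨s.2.2, s.2.1, Finset.mem_univ _⟩
      · rintro ⟨h2, h1, -⟩
        exact ⟨⟨x, h1, h2⟩, Finset.mem_def.1 (Finset.mem_univ _), rfl⟩
  rw [hi, Multiset.map_cons, hj, Multiset.map_cons, ← hrest, Multiset.map_map]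
  rfl

lemma aux_prod_eq (T : Type*) [Fintype T] (g : T → ℂ) :
    (∏ s : T, (X - C (g s))) = ((Finset.univ.val.map g).map (fun z => X - C z)).prod := by
  rw [Finset.prod_eq_multiset_prod, Multiset.map_map]
  rfl

lemma cmat_roots {n : ℕ} (lam : Fin n → ℂ) (i j : Fin n) (hij : i ≠ j)
    (a b q x y : ℂ) (hsum : x + y = a + b) (hprod : x * y = a * b - q * q) :
    (Cmat lam i j a b q).charpoly.roots =
      x ::ₘ y ::ₘ
        Multiset.map (fun s : {k : Fin n // k ≠ i ∧ k ≠ j} => lam s.1)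
          (Finset.univ : Finset {k : Fin n // k ≠ i ∧ k ≠ j}).val := by
  rw [cmat_charpoly lam i j hij a b q x y hsum hprod]
  have m1 : ((X - C x) * (X - C y)).Monic := (monic_X_sub_C _).mul (monic_X_sub_C _)
  have m2 : (∏ s : {k : Fin n // k ≠ i ∧ k ≠ j}, (X - C (lam s.1))).Monic :=
    monic_prod_of_monic _ _ fun _ _ => monic_X_sub_C _
  rw [Polynomial.roots_mul (mul_ne_zero m1.ne_zero m2.ne_zero),
    Polynomial.roots_mul (mul_ne_zero (X_sub_C_ne_zero x) (X_sub_C_ne_zero y)),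
    roots_X_sub_C, roots_X_sub_C, aux_prod_eq, Polynomial.roots_multiset_prod_X_sub_C]
  rw [Multiset.singleton_add, Multiset.cons_add, Multiset.singleton_add]

lemma cmat_diff {n : ℕ} (lam : Fin n → ℂ) (i j : Fin n) (hij : i ≠ j) (a b q : ℂ)
    (k l : Fin n) :
    Cmat lam i j a b q k l - Matrix.diagonal lam k l = a - lam i ∨
    Cmat lam i j a b q k l - Matrix.diagonal lam k l = b - lam j ∨
    Cmat lam i j a b q k l - Matrix.diagonal lam k l = q ∨
    Cmat lam i j a b q k l - Matrix.diagonal lam k l = 0 := by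
  rw [Cmat, Matrix.of_apply, Matrix.diagonal_apply]
  split_ifs <;> subst_vars <;> simp_all

lemma cmat_eq_diagonal {n : ℕ} (lam : Fin n → ℂ) (i j : Fin n) (hij : i ≠ j) :
    Cmat lam i j (lam i) (lam j) 0 = Matrix.diagonal lam := by
  ext k l
  rw [Cmat, Matrix.of_apply, Matrix.diagonal_apply]
  split_ifs <;> subst_vars <;> simp_all

lemma cmat_continuous {n : ℕ} (lam : Fin n → ℂ) (i j : Fin n)
    (a b q : ℝ → ℂ) (ha : Continuous a) (hb : Continuous b) (hq : Continuous q) :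
    Continuous fun α => Cmat lam i j (a α) (b α) (q α) := by
  apply continuous_matrix
  intro k l
  simp only [Cmat, Matrix.of_apply]
  split_ifs <;> continuity

lemma aux_card {n : ℕ} (g : Fin n → ℂ) (hg : Function.Injective g) :
    ((Finset.univ : Finset (Fin n)).val.map g).toFinset.card = n := by
  rw [Multiset.toFinset_card_of_nodup (Multiset.Nodup.map hg Finset.univ.nodup),
    Multiset.card_map]
  simp

set_option maxHeartbeats 2000000 in
theorem diagonal_swap_path
    (n : ℕ) (hn : 2 ≤ n) (lam : Fin n → ℂ) (hinj : Function.Injective lam)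
    (i j : Fin n) (hij : i ≠ j) :
    ∃ C : ℝ → Matrix (Fin n) (Fin n) ℂ, ContinuousOn C (Set.Icc 0 1) ∧
      C 0 = Matrix.diagonal lam ∧ C 1 = Matrix.diagonal lam ∧
      (∀ α ∈ Set.Icc (0 : ℝ) 1, (Matrix.charpoly (C α)).roots.toFinset.card = n) ∧
      (∀ α ∈ Set.Icc (0 : ℝ) 1, ∀ k l,
        ‖C α k l - Matrix.diagonal lam k l‖ < ‖lam i - lam j‖) ∧
      ∃ γ : Fin n → ℝ → ℂ, IsEigenpathSet n C γ ∧
        (∀ k, γ k 0 = lam k) ∧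
        γ i 1 = lam j ∧ γ j 1 = lam i ∧
        ∀ k, k ≠ i → k ≠ j → γ k 1 = lam k := by
  classical
  set m : ℂ := (lam i + lam j) / 2 with hm
  set δ : ℂ := (lam i - lam j) / 2 with hδdef
  have hmpδ : m + δ = lam i := by rw [hm, hδdef]; ring
  have hmmδ : m - δ = lam j := by rw [hm, hδdef]; ring
  have hδ0 : δ ≠ 0 := by
    rw [hδdef, div_ne_zero_iff, sub_ne_zero]
    exact ⟨fun h => hij (hinj h), by norm_num⟩
  -- the ellipse parameter c
  set bv : ℂ → ℝ := fun u => u.im / Real.sqrt (1 - u.re ^ 2) with hbv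
  set B : Finset ℝ :=
    (Finset.univ.image fun k : Fin n => bv ((lam k - m) / δ)) ∪
      (Finset.univ.image fun k : Fin n => bv ((m - lam k) / δ)) with hB
  obtain ⟨c, hcpos, hc1, hclt⟩ : ∃ c : ℝ, 0 < c ∧ c ≤ 1 ∧ ∀ x ∈ B, 0 < x → c ≠ x := by
    set Bpos : Finset ℝ := insert 1 (B.filter fun x => 0 < x) with hBpos
    have hBposne : Bpos.Nonempty := ⟨1, Finset.mem_insert_self _ _⟩
    set r : ℝ := Bpos.min' hBposne with hr
    have hrpos : 0 < r := by
      have h := Bpos.min'_mem hBposne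
      rw [← hr] at h
      rcases Finset.mem_insert.1 h with h | h
      · rw [h]; norm_num
      · exact (Finset.mem_filter.1 h).2
    have hr1 : r ≤ 1 := Finset.min'_le _ _ (Finset.mem_insert_self _ _)
    refine ⟨r / 2, by linarith, by linarith, ?_⟩
    intro x hx hx0
    have hle : r ≤ x :=
      Finset.min'_le _ _ (Finset.mem_insert_of_mem (Finset.mem_filter.2 ⟨hx, hx0⟩))
    intro h; linarith
  -- the path functions
  set f : ℝ → ℂ := fun α =>
    (Real.cos (Real.pi * α) : ℂ) + Complex.I * ((c * Real.sin (Real.pi * α) : ℝ) : ℂ) with hf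
  have hfre : ∀ α, (f α).re = Real.cos (Real.pi * α) := by
    intro α
    simp only [hf, Complex.add_re, Complex.ofReal_re, Complex.mul_re, Complex.I_re,
      Complex.I_im, Complex.ofReal_im]
    ring
  have hfim : ∀ α, (f α).im = c * Real.sin (Real.pi * α) := by
    intro α
    simp only [hf, Complex.add_im, Complex.ofReal_im, Complex.mul_im, Complex.I_re,
      Complex.I_im, Complex.ofReal_re]
    ring
  have hfcont : Continuous f := by rw [hf]; fun_prop
  have hf0 : f 0 = 1 := by simp [hf]
  have hf1 : f 1 = -1 := by
    rw [hf]; simp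
  have hsin_nonneg : ∀ α ∈ Set.Icc (0:ℝ) 1, 0 ≤ Real.sin (Real.pi * α) := by
    intro α hα
    apply Real.sin_nonneg_of_nonneg_of_le_pi
    · have := Real.pi_pos; nlinarith [hα.1]
    · nlinarith [hα.2, Real.pi_pos]
  have main : ∀ α ∈ Set.Icc (0:ℝ) 1, ∀ u : ℂ, f α = u →
      u = 1 ∨ u = -1 ∨ (0 < u.im ∧ c = bv u) := by
    intro α hα u hu
    have hre : Real.cos (Real.pi * α) = u.re := by rw [← hu]; exact (hfre α).symm
    have him : c * Real.sin (Real.pi * α) = u.im := by rw [← hu]; exact (hfim α).symm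
    have hsc : Real.sin (Real.pi * α) ^ 2 + Real.cos (Real.pi * α) ^ 2 = 1 :=
      Real.sin_sq_add_cos_sq _
    by_cases hs : Real.sin (Real.pi * α) = 0
    · have him0 : u.im = 0 := by rw [← him, hs]; ring
      have hco2 : Real.cos (Real.pi * α) ^ 2 = 1 := by nlinarith
      have hco : Real.cos (Real.pi * α) = 1 ∨ Real.cos (Real.pi * α) = -1 := by
        rcases mul_eq_zero.1 (show (Real.cos (Real.pi * α) - 1) * (Real.cos (Real.pi * α) + 1) = 0
          by linear_combination hco2) with h | h
        · exact Or.inl (by linarith)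
        · exact Or.inr (by linarith)
      rcases hco with h | h
      · left; apply Complex.ext <;> simp [← hre, h, him0]
      · right; left; apply Complex.ext <;> simp [← hre, h, him0]
    · right; right
      have hspos : 0 < Real.sin (Real.pi * α) := lt_of_le_of_ne (hsin_nonneg α hα) (Ne.symm hs)
      have himpos : 0 < u.im := by rw [← him]; positivity
      refine ⟨himpos, ?_⟩
      have h1 : 1 - u.re ^ 2 = Real.sin (Real.pi * α) ^ 2 := by
        rw [← hre]; nlinarith
      rw [hbv]
      show c = u.im / Real.sqrt (1 - u.re ^ 2)
      rw [h1, Real.sqrt_sq hspos.le, ← him]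
      field_simp
  have key : ∀ α ∈ Set.Icc (0:ℝ) 1, ∀ k, k ≠ i → k ≠ j →
      m + δ * f α ≠ lam k ∧ m - δ * f α ≠ lam k := by
    intro α hα k hki hkj
    constructor
    · intro hcon
      have hu : f α = (lam k - m) / δ := by
        rw [eq_div_iff hδ0]; linear_combination hcon
      rcases main α hα _ hu with h1 | h1 | ⟨himpos, hc⟩
      · apply hki; apply hinj
        have h2 : lam k - m = δ := by
          field_simp [hδ0] at h1; linear_combination h1
        rw [← hmpδ]; linear_combination h2
      · apply hkj; apply hinj
        have h2 : lam k - m = -δ := by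
          field_simp at h1; linear_combination h1
        rw [← hmmδ]; linear_combination h2
      · refine hclt (bv ((lam k - m) / δ)) ?_ ?_ hc
        · rw [hB]
          exact Finset.mem_union_left _ (Finset.mem_image.2 ⟨k, Finset.mem_univ _, rfl⟩)
        · rw [← hc]; exact hcpos
    · intro hcon
      have hu : f α = (m - lam k) / δ := by
        rw [eq_div_iff hδ0]; linear_combination -hcon
      rcases main α hα _ hu with h1 | h1 | ⟨himpos, hc⟩
      · apply hkj; apply hinj
        have h2 : m - lam k = δ := by
          field_simp [hδ0] at h1; linear_combination h1
        rw [← hmmδ]; linear_combination -h2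
      · apply hki; apply hinj
        have h2 : m - lam k = -δ := by
          field_simp at h1; linear_combination h1
        rw [← hmpδ]; linear_combination -h2
      · refine hclt (bv ((m - lam k) / δ)) ?_ ?_ hc
        · rw [hB]
          exact Finset.mem_union_right _ (Finset.mem_image.2 ⟨k, Finset.mem_univ _, rfl⟩)
        · rw [← hc]; exact hcpos
  have hfne : ∀ α ∈ Set.Icc (0:ℝ) 1, f α ≠ 0 := by
    intro α hα h0
    have h1 : Real.cos (Real.pi * α) = 0 := by rw [← hfre α, h0]; simp
    have h2 : c * Real.sin (Real.pi * α) = 0 := by rw [← hfim α, h0]; simp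
    have h3 : Real.sin (Real.pi * α) = 0 := by
      rcases mul_eq_zero.1 h2 with h | h
      · exact absurd h (ne_of_gt hcpos)
      · exact h
    nlinarith [Real.sin_sq_add_cos_sq (Real.pi * α)]
  -- the matrix path
  set CC : ℝ → Matrix (Fin n) (Fin n) ℂ := fun α =>
    Cmat lam i j (m + δ * f α * (Real.cos (Real.pi * α) : ℂ))
      (m - δ * f α * (Real.cos (Real.pi * α) : ℂ))
      (δ * f α * (Real.sin (Real.pi * α) : ℂ)) with hCC
  set γ : Fin n → ℝ → ℂ := fun k α =>
    if k = i then m + δ * f α else if k = j then m - δ * f α else lam k with hγ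
  have hcs : ∀ α : ℝ, ((Real.cos (Real.pi * α) : ℂ))^2 + ((Real.sin (Real.pi * α) : ℂ))^2 = 1 := by
    intro α
    exact_mod_cast congrArg (fun x : ℝ => (x : ℂ)) (Real.cos_sq_add_sin_sq (Real.pi * α))
  have hroots : ∀ α : ℝ, (CC α).charpoly.roots =
      (m + δ * f α) ::ₘ (m - δ * f α) ::ₘ
        Multiset.map (fun s : {k : Fin n // k ≠ i ∧ k ≠ j} => lam s.1)
          (Finset.univ : Finset {k : Fin n // k ≠ i ∧ k ≠ j}).val := by
    intro α
    simp only [hCC]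
    refine cmat_roots lam i j hij _ _ _ _ _ (by ring) ?_
    linear_combination ((δ * f α)^2) * hcs α
  have hmulti : ∀ α : ℝ,
      ((Finset.univ : Finset (Fin n)).val.map fun k => γ k α) =
      (m + δ * f α) ::ₘ (m - δ * f α) ::ₘ
        Multiset.map (fun s : {k : Fin n // k ≠ i ∧ k ≠ j} => lam s.1)
          (Finset.univ : Finset {k : Fin n // k ≠ i ∧ k ≠ j}).val := by
    intro α
    rw [aux_univ_map_val i j hij]
    have h1 : γ i α = m + δ * f α := by simp [hγ]
    have h2 : γ j α = m - δ * f α := by simp [hγ, Ne.symm hij]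
    rw [h1, h2]
    congr 1
    congr 1
    refine Multiset.map_congr rfl ?_
    intro s _
    simp [hγ, s.2.1, s.2.2]
  have hginj : ∀ α ∈ Set.Icc (0:ℝ) 1, Function.Injective (fun k => γ k α) := by
    intro α hα k l hkl
    simp only [hγ] at hkl
    have hAB : m + δ * f α ≠ m - δ * f α := by
      intro h
      have h2 : δ * f α = 0 := by linear_combination h / 2
      exact (mul_ne_zero hδ0 (hfne α hα)) h2
    by_cases hk : k = i
    · by_cases hl : l = i
      · rw [hk, hl]
      · by_cases hl2 : l = j
        · rw [if_pos hk, if_neg hl, if_pos hl2] at hkl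
          exact absurd hkl hAB
        · rw [if_pos hk, if_neg hl, if_neg hl2] at hkl
          exact absurd hkl (key α hα l hl hl2).1
    · by_cases hk2 : k = j
      · by_cases hl : l = i
        · rw [if_neg hk, if_pos hk2, if_pos hl] at hkl
          exact absurd hkl.symm hAB
        · by_cases hl2 : l = j
          · rw [hk2, hl2]
          · rw [if_neg hk, if_pos hk2, if_neg hl, if_neg hl2] at hkl
            exact absurd hkl (key α hα l hl hl2).2
      · by_cases hl : l = i
        · rw [if_neg hk, if_neg hk2, if_pos hl] at hkl
          exact absurd hkl.symm (key α hα k hk hk2).1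
        · by_cases hl2 : l = j
          · rw [if_neg hk, if_neg hk2, if_neg hl, if_pos hl2] at hkl
            exact absurd hkl.symm (key α hα k hk hk2).2
          · rw [if_neg hk, if_neg hk2, if_neg hl, if_neg hl2] at hkl
            exact hinj hkl
  -- continuity
  have hacont : Continuous fun α => m + δ * f α * (Real.cos (Real.pi * α) : ℂ) := by
    refine continuous_const.add ((continuous_const.mul hfcont).mul ?_)
    exact Complex.continuous_ofReal.comp (Real.continuous_cos.comp (continuous_const.mul continuous_id))
  have hbcont : Continuous fun α => m - δ * f α * (Real.cos (Real.pi * α) : ℂ) := by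
    refine continuous_const.sub ((continuous_const.mul hfcont).mul ?_)
    exact Complex.continuous_ofReal.comp (Real.continuous_cos.comp (continuous_const.mul continuous_id))
  have hqcont : Continuous fun α => δ * f α * (Real.sin (Real.pi * α) : ℂ) := by
    refine (continuous_const.mul hfcont).mul ?_
    exact Complex.continuous_ofReal.comp (Real.continuous_sin.comp (continuous_const.mul continuous_id))
  have hCCcont : Continuous CC := by
    rw [hCC]
    exact cmat_continuous lam i j _ _ _ hacont hbcont hqcont
  -- endpoints
  have hC0 : CC 0 = Matrix.diagonal lam := by
    rw [hCC]
    simp only [mul_zero, Real.cos_zero, Real.sin_zero, hf0, Complex.ofReal_one,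
      Complex.ofReal_zero, mul_one]
    rw [hmpδ, hmmδ]
    exact cmat_eq_diagonal lam i j hij
  have hC1 : CC 1 = Matrix.diagonal lam := by
    rw [hCC]
    simp only [mul_one, Real.cos_pi, Real.sin_pi, hf1, Complex.ofReal_neg,
      Complex.ofReal_one, Complex.ofReal_zero, mul_zero, mul_neg, mul_one, neg_neg]
    rw [hmpδ, hmmδ]
    exact cmat_eq_diagonal lam i j hij
  -- bounds
  have habs2δ : ‖lam i - lam j‖ = 2 * ‖δ‖ := by
    rw [show lam i - lam j = 2 * δ by rw [hδdef]; ring, norm_mul, Complex.norm_two]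
  have habsδpos : 0 < ‖δ‖ := norm_pos_iff.mpr hδ0
  have hc2 : c ^ 2 ≤ 1 := by nlinarith
  have hb1 : ∀ α : ℝ, ‖f α * (Real.cos (Real.pi * α) : ℂ) - 1‖ ≤ 1 := by
    intro α
    apply aux_abs_le_one
    have hre2 : (f α * (Real.cos (Real.pi * α) : ℂ) - 1).re =
        Real.cos (Real.pi * α) * Real.cos (Real.pi * α) - 1 := by
      simp only [Complex.sub_re, Complex.mul_re, Complex.ofReal_re, Complex.ofReal_im,
        Complex.one_re, hfre, hfim]
      ring
    have him2 : (f α * (Real.cos (Real.pi * α) : ℂ) - 1).im =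
        c * Real.sin (Real.pi * α) * Real.cos (Real.pi * α) := by
      simp only [Complex.sub_im, Complex.mul_im, Complex.ofReal_re, Complex.ofReal_im,
        Complex.one_im, hfre, hfim]
      ring
    rw [hre2, him2]
    have hsc := Real.sin_sq_add_cos_sq (Real.pi * α)
    nlinarith [sq_nonneg (Real.sin (Real.pi * α) * Real.cos (Real.pi * α)),
      sq_nonneg (Real.sin (Real.pi * α)), sq_nonneg (Real.cos (Real.pi * α)),
      sq_nonneg (Real.sin (Real.pi * α) ^ 2), hc2,
      sq_nonneg (Real.sin (Real.pi * α) * Real.sin (Real.pi * α))]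
  have hb2 : ∀ α : ℝ, ‖f α * (Real.sin (Real.pi * α) : ℂ)‖ ≤ 1 := by
    intro α
    apply aux_abs_le_one
    have hre2 : (f α * (Real.sin (Real.pi * α) : ℂ)).re =
        Real.cos (Real.pi * α) * Real.sin (Real.pi * α) := by
      simp only [Complex.mul_re, Complex.ofReal_re, Complex.ofReal_im, hfre, hfim]
      ring
    have him2 : (f α * (Real.sin (Real.pi * α) : ℂ)).im =
        c * Real.sin (Real.pi * α) * Real.sin (Real.pi * α) := by
      simp only [Complex.mul_im, Complex.ofReal_re, Complex.ofReal_im, hfre, hfim]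
      ring
    rw [hre2, him2]
    have hsc := Real.sin_sq_add_cos_sq (Real.pi * α)
    nlinarith [sq_nonneg (Real.sin (Real.pi * α) * Real.cos (Real.pi * α)),
      sq_nonneg (Real.sin (Real.pi * α)), sq_nonneg (Real.cos (Real.pi * α)), hc2,
      sq_nonneg (Real.sin (Real.pi * α) * Real.sin (Real.pi * α))]
  have hnorm : ∀ α ∈ Set.Icc (0:ℝ) 1, ∀ k l,
      ‖CC α k l - Matrix.diagonal lam k l‖ < ‖lam i - lam j‖ := by
    intro α hα k l
    rw [habs2δ]
    have hd := cmat_diff lam i j hij (m + δ * f α * (Real.cos (Real.pi * α) : ℂ))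
      (m - δ * f α * (Real.cos (Real.pi * α) : ℂ)) (δ * f α * (Real.sin (Real.pi * α) : ℂ)) k l
    have hCCa : CC α k l = Cmat lam i j (m + δ * f α * (Real.cos (Real.pi * α) : ℂ))
      (m - δ * f α * (Real.cos (Real.pi * α) : ℂ)) (δ * f α * (Real.sin (Real.pi * α) : ℂ)) k l := by
      rw [hCC]
    rw [hCCa]
    rcases hd with h | h | h | h <;> rw [h]
    · rw [show m + δ * f α * (Real.cos (Real.pi * α) : ℂ) - lam i =
        δ * (f α * (Real.cos (Real.pi * α) : ℂ) - 1) by rw [← hmpδ]; ring, norm_mul]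
      nlinarith [hb1 α, norm_nonneg (f α * (Real.cos (Real.pi * α) : ℂ) - 1)]
    · rw [show m - δ * f α * (Real.cos (Real.pi * α) : ℂ) - lam j =
        -(δ * (f α * (Real.cos (Real.pi * α) : ℂ) - 1)) by rw [← hmmδ]; ring, norm_neg, norm_mul]
      nlinarith [hb1 α, norm_nonneg (f α * (Real.cos (Real.pi * α) : ℂ) - 1)]
    · rw [show δ * f α * (Real.sin (Real.pi * α) : ℂ) =
        δ * (f α * (Real.sin (Real.pi * α) : ℂ)) by ring, norm_mul]
      nlinarith [hb2 α, norm_nonneg (f α * (Real.sin (Real.pi * α) : ℂ))]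
    · rw [norm_zero]
      nlinarith
  -- eigenpath continuity
  have hγcont : ∀ k, ContinuousOn (γ k) (Set.Icc (0:ℝ) 1) := by
    intro k
    apply Continuous.continuousOn
    by_cases hk : k = i
    · have : γ k = fun α => m + δ * f α := by funext α; simp [hγ, hk]
      rw [this]
      exact continuous_const.add (continuous_const.mul hfcont)
    · by_cases hk2 : k = j
      · have : γ k = fun α => m - δ * f α := by funext α; simp [hγ, hk2, Ne.symm hij]
        rw [this]
        exact continuous_const.sub (continuous_const.mul hfcont)
      · have : γ k = fun _ => lam k := by funext α; simp [hγ, hk, hk2]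
        rw [this]
        exact continuous_const
  -- endpoints of γ
  have hγ0 : ∀ k, γ k 0 = lam k := by
    intro k
    simp only [hγ]
    by_cases hk : k = i
    · rw [if_pos hk, hf0, mul_one, hmpδ, hk]
    · by_cases hk2 : k = j
      · rw [if_neg hk, if_pos hk2, hf0, mul_one, hmmδ, hk2]
      · rw [if_neg hk, if_neg hk2]
  have hγi1 : γ i 1 = lam j := by
    have h : γ i 1 = m + δ * f 1 := by simp [hγ]
    rw [h, hf1]
    linear_combination hmmδ
  have hγj1 : γ j 1 = lam i := by
    have h : γ j 1 = m - δ * f 1 := by simp [hγ, Ne.symm hij]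
    rw [h, hf1]
    linear_combination hmpδ
  have hγk1 : ∀ k, k ≠ i → k ≠ j → γ k 1 = lam k := by
    intro k hk hk2
    simp only [hγ, if_neg hk, if_neg hk2]
  refine ⟨CC, hCCcont.continuousOn, hC0, hC1, ?_, hnorm, γ, ⟨hγcont, ?_⟩, hγ0, hγi1, hγj1, hγk1⟩
  · intro α hα
    rw [hroots α, ← hmulti α]
    exact aux_card _ (hginj α hα)
  · intro α hα
    rw [hroots α, hmulti α]
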